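/- Let H be a Hermitian matrix on ℂ^X for a finite type X whose off-diagonal entries are all real and non-positive (H is stoquastic), let λ be the smallest eigenvalue of H, and let P be the orthogonal projection onto the eigenspace ker(H − λI). Then there exists a finite family {φ_j} of pairwise orthogonal unit vectors in ℂ^X, each with all entries non-negative reals, such that P = Σ_j |φ_j⟩⟨φ_j|. -/

import Mathlib

open Matrix

/-- Any submodule of `X → ℝ` closed under pointwise absolute value is spanned by a finite
family of nonzero nonnegative vectors with pairwise disjoint supports. -/
lemma absClosed_decomp {X : Type} [Fintype X] [DecidableEq X] (V : Submodule ℝ (X → ℝ))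
    (habs : ∀ u ∈ V, (fun x => |u x|) ∈ V) :
    ∃ (r : ℕ) (v : Fin r → X → ℝ),
      (∀ j, v j ∈ V) ∧ (∀ j x, 0 ≤ v j x) ∧ (∀ j, v j ≠ 0) ∧
      (∀ j j', j ≠ j' → ∀ x, v j x * v j' x = 0) ∧
      V ≤ Submodule.span ℝ (Set.range v) := by
  classical
  suffices h : ∀ (n : ℕ) (V : Submodule ℝ (X → ℝ)), Module.finrank ℝ V ≤ n →
      (∀ u ∈ V, (fun x => |u x|) ∈ V) →
      ∃ (r : ℕ) (v : Fin r → X → ℝ),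
        (∀ j, v j ∈ V) ∧ (∀ j x, 0 ≤ v j x) ∧ (∀ j, v j ≠ 0) ∧
        (∀ j j', j ≠ j' → ∀ x, v j x * v j' x = 0) ∧
        V ≤ Submodule.span ℝ (Set.range v) by
    exact h (Module.finrank ℝ V) V le_rfl habs
  intro n
  induction n with
  | zero =>
    intro V hr _
    refine ⟨0, Fin.elim0, fun j => j.elim0, fun j => j.elim0, fun j => j.elim0,
      fun j j' h => j.elim0, ?_⟩
    have : V = ⊥ := Submodule.finrank_eq_zero.mp (Nat.le_zero.mp hr)
    rw [this]; exact bot_le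
  | succ n IH =>
    intro V hr habs
    by_cases hV : ∀ u ∈ V, u = (0 : X → ℝ)
    · refine ⟨0, Fin.elim0, fun j => j.elim0, fun j => j.elim0, fun j => j.elim0,
        fun j j' h => j.elim0, ?_⟩
      intro u hu
      rw [hV u hu]; exact Submodule.zero_mem _
    push_neg at hV
    obtain ⟨z, hzV, hz0⟩ := hV
    -- the set of support-cardinalities of nonzero nonneg elements of V
    set pred : ℕ → Prop := fun k => ∃ w, w ∈ V ∧ (∀ x, 0 ≤ w x) ∧ w ≠ 0 ∧
      (Finset.univ.filter fun x => w x ≠ 0).card = k with hpred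
    have hex : {k | pred k}.Nonempty := by
      refine ⟨_, (fun x => |z x|), habs z hzV, fun x => abs_nonneg _, ?_, rfl⟩
      intro h
      exact hz0 (funext fun x => abs_eq_zero.mp (congrFun h x))
    obtain ⟨k, hk, hkmin⟩ := Nat.lt_wfRel.wf.has_min _ hex
    obtain ⟨w, hwV, hw0, hwne, hwcard⟩ := hk
    set S : Finset X := Finset.univ.filter fun x => w x ≠ 0 with hS
    have hSne : S.Nonempty := by
      obtain ⟨x, hx⟩ := Function.ne_iff.mp hwne
      simp only [Pi.zero_apply] at hx
      exact ⟨x, by simp [hS, hx]⟩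
    obtain ⟨x0, hx0S⟩ := hSne
    have hwx0 : w x0 ≠ 0 := by simpa [hS] using hx0S
    -- key claim: every z ∈ V is proportional to w on S
    have key : ∀ z ∈ V, ∀ x ∈ S, z x = (z x0 / w x0) * w x := by
      intro z hzV x hxS
      set t : ℝ := z x0 / w x0 with ht
      set y : X → ℝ := z - t • w with hy
      have hyV : y ∈ V := V.sub_mem hzV (V.smul_mem t hwV)
      set a : X → ℝ := fun x => |y x| with ha
      have haV : a ∈ V := habs y hyV
      set m : X → ℝ := (a + w) - (fun x => |(a - w) x|) with hm
      have hmV : m ∈ V := V.sub_mem (V.add_mem haV hwV) (habs (a - w) (V.sub_mem haV hwV))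
      have hmmin : ∀ x, m x = 2 * min (a x) (w x) := by
        intro x
        have : (a - w) x = a x - w x := rfl
        simp only [hm, Pi.sub_apply, Pi.add_apply, this]
        rcases le_total (a x) (w x) with h | h
        · rw [abs_of_nonpos (by linarith), min_eq_left h]; ring
        · rw [abs_of_nonneg (by linarith), min_eq_right h]; ring
      have hax0 : a x0 = 0 := by
        simp only [ha, hy, Pi.sub_apply, Pi.smul_apply, smul_eq_mul, ht]
        rw [div_mul_cancel₀ _ hwx0]; simp
      have hm0 : ∀ x, 0 ≤ m x := by
        intro x
        rw [hmmin x]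
        have := abs_nonneg (y x)
        have := hw0 x
        positivity
      -- m must be zero, else it contradicts minimality
      have hmzero : m = 0 := by
        by_contra hmne
        have hsub : (Finset.univ.filter fun x => m x ≠ 0) ⊂ S := by
          constructor
          · intro x hx
            simp only [Finset.mem_filter, Finset.mem_univ, true_and] at hx
            rw [hmmin x] at hx
            have hwx : w x ≠ 0 := by
              intro h; apply hx
              have hax : (0:ℝ) ≤ a x := abs_nonneg _
              rw [h, min_eq_right hax]; ring
            simp [hS, hwx]
          · intro hle
            have := hle hx0S
            simp only [Finset.mem_filter, Finset.mem_univ, true_and] at this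
            apply this
            rw [hmmin x0, hax0, min_eq_left (hw0 x0)]; ring
        have hlt : (Finset.univ.filter fun x => m x ≠ 0).card < k := by
          rw [← hwcard]; exact Finset.card_lt_card hsub
        exact hkmin _ ⟨m, hmV, hm0, hmne, rfl⟩ hlt
      -- conclude
      have hax : a x = 0 := by
        have hmx := congrFun hmzero x
        simp only [Pi.zero_apply] at hmx
        rw [hmmin x] at hmx
        have hwx : 0 < w x := by
          rcases (hw0 x).lt_or_eq with h | h
          · exact h
          · exact absurd h.symm (by simpa [hS] using hxS)
        have := min_eq_iff.mp (by linarith : min (a x) (w x) = 0)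
        rcases this with ⟨h1, _⟩ | ⟨h1, _⟩
        · exact h1
        · exact absurd h1 hwx.ne'
      have : y x = 0 := abs_eq_zero.mp hax
      have : z x - t * w x = 0 := this
      linarith
    -- the subspace of elements of V vanishing on S
    set K : Submodule ℝ (X → ℝ) :=
      { carrier := {u | ∀ x ∈ S, u x = 0}
        add_mem' := fun hu hv x hx => by simp [hu x hx, hv x hx]
        zero_mem' := fun x _ => rfl
        smul_mem' := fun c u hu x hx => by simp [hu x hx] } with hK
    set V' : Submodule ℝ (X → ℝ) := V ⊓ K with hV'
    have habs' : ∀ u ∈ V', (fun x => |u x|) ∈ V' := by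
      rintro u ⟨huV, huK⟩
      exact ⟨habs u huV, fun x hx => by simp [huK x hx]⟩
    have hwK : w ∉ V' := by
      rintro ⟨-, hK2⟩
      exact hwx0 (hK2 x0 hx0S)
    have hlt : V' < V := lt_of_le_of_ne inf_le_left (fun h => hwK (h ▸ hwV))
    have hr' : Module.finrank ℝ V' ≤ n := by
      have := Submodule.finrank_lt_finrank_of_lt (s := V') (t := V) hlt
      omega
    obtain ⟨r', v', hv'V, hv'0, hv'ne, hv'disj, hv'span⟩ := IH V' hr' habs'
    refine ⟨r' + 1, Fin.cons w v', ?_, ?_, ?_, ?_, ?_⟩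
    · intro j
      refine Fin.cases ?_ ?_ j
      · exact hwV
      · exact fun i => ((hv'V i).1 : v' i ∈ V)
    · intro j
      refine Fin.cases ?_ ?_ j
      · exact hw0
      · exact hv'0
    · intro j
      refine Fin.cases ?_ ?_ j
      · exact hwne
      · exact hv'ne
    · intro j j' hne x
      rcases Fin.eq_zero_or_eq_succ j with rfl | ⟨i, rfl⟩ <;>
        rcases Fin.eq_zero_or_eq_succ j' with rfl | ⟨i', rfl⟩
      · exact absurd rfl hne
      · simp only [Fin.cons_zero, Fin.cons_succ]
        by_cases hwx : w x = 0
        · simp [hwx]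
        · have : x ∈ S := by simp [hS, hwx]
          rw [(hv'V i').2 x this]; ring
      · simp only [Fin.cons_zero, Fin.cons_succ]
        by_cases hwx : w x = 0
        · simp [hwx]
        · have : x ∈ S := by simp [hS, hwx]
          rw [(hv'V i).2 x this]; ring
      · simp only [Fin.cons_succ]
        refine hv'disj i i' (fun h => hne (by rw [h])) x
    · intro u huV
      set t : ℝ := u x0 / w x0 with ht
      have hu' : u - t • w ∈ V' := by
        refine ⟨V.sub_mem huV (V.smul_mem _ hwV), fun x hx => ?_⟩
        have := key u huV x hx
        simp only [Pi.sub_apply, Pi.smul_apply, smul_eq_mul]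
        rw [this]; ring
      have hsub : Set.range v' ⊆ Set.range (Fin.cons w v' : Fin (r' + 1) → X → ℝ) := by
        rw [Fin.range_cons]; exact Set.subset_insert _ _
      have h1 : u - t • w ∈ Submodule.span ℝ (Set.range (Fin.cons w v' : Fin (r' + 1) → X → ℝ)) :=
        Submodule.span_mono hsub (hv'span hu')
      have h2 : w ∈ Submodule.span ℝ (Set.range (Fin.cons w v' : Fin (r' + 1) → X → ℝ)) :=
        Submodule.subset_span (by rw [Fin.range_cons]; exact Set.mem_insert _ _)
      have := Submodule.add_mem _ h1 (Submodule.smul_mem _ t h2)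
      simpa using this

/-- The projection onto the groundspace of a stoquastic Hamiltonian has a decomposition
into pairwise orthogonal non-negative unit vectors. -/
theorem stmt1 {X : Type} [Fintype X] [DecidableEq X]
    (H : Matrix X X ℂ) (hHerm : H.IsHermitian)
    (hstoq : ∀ x y, x ≠ y → (H x y).im = 0 ∧ (H x y).re ≤ 0)
    (lam : ℝ)
    (heig : ∃ v : X → ℂ, v ≠ 0 ∧ H.mulVec v = (lam : ℂ) • v)
    (hmin : ∀ μ : ℝ, (∃ v : X → ℂ, v ≠ 0 ∧ H.mulVec v = (μ : ℂ) • v) → lam ≤ μ)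
    (P : Matrix X X ℂ)
    (hP1 : P.IsHermitian) (hP2 : P * P = P)
    (hPrange : ∀ v : X → ℂ, H.mulVec (P.mulVec v) = (lam : ℂ) • P.mulVec v)
    (hPfix : ∀ v : X → ℂ, H.mulVec v = (lam : ℂ) • v → P.mulVec v = v) :
    ∃ (r : ℕ) (φ : Fin r → X → ℂ),
      (∀ j x, (φ j x).im = 0 ∧ 0 ≤ (φ j x).re) ∧
      (∀ j, star (φ j) ⬝ᵥ φ j = 1) ∧
      (∀ j j', j ≠ j' → star (φ j) ⬝ᵥ φ j' = 0) ∧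
      P = ∑ j, vecMulVec (φ j) (star (φ j)) := by
  classical
  -- the real matrix of H
  set Hre : Matrix X X ℝ := fun x y => (H x y).re with hHre
  have hHr : ∀ x y, H x y = ((Hre x y : ℝ) : ℂ) := by
    intro x y
    have him : (H x y).im = 0 := by
      by_cases h : x = y
      · subst h
        have := hHerm.apply x x
        have h2 := congrArg Complex.im this
        simp only [Complex.star_def, Complex.conj_im] at h2
        linarith
      · exact (hstoq x y h).1
    exact Complex.ext rfl (by simpa using him)
  have hsymm : ∀ x y, Hre x y = Hre y x := by
    intro x y
    have := hHerm.apply x y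
    have h2 := congrArg Complex.re this
    simpa [hHre, Complex.star_def] using h2.symm
  -- complexification of real vectors
  set c : (X → ℝ) → (X → ℂ) := fun u x => ((u x : ℝ) : ℂ) with hc
  have hcmv : ∀ u : X → ℝ, H *ᵥ c u = c (Hre *ᵥ u) := by
    intro u
    funext x
    show ∑ y, H x y * ((u y : ℝ) : ℂ) = ((∑ y, Hre x y * u y : ℝ) : ℂ)
    push_cast
    exact Finset.sum_congr rfl fun y _ => by rw [hHr x y]
  have hcsmul : ∀ (t : ℝ) (u : X → ℝ), c (t • u) = (t : ℂ) • c u := by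
    intro t u; funext x; simp [hc]
  have hcne : ∀ u : X → ℝ, u ≠ 0 → c u ≠ 0 := by
    intro u hu h
    apply hu
    funext x
    have := congrFun h x
    simpa [hc] using this
  -- the shifted matrix
  set Mre : Matrix X X ℝ := Hre - lam • 1 with hMre
  have hMmv : ∀ u : X → ℝ, Mre *ᵥ u = Hre *ᵥ u - lam • u := by
    intro u
    simp [hMre, sub_mulVec, smul_mulVec, one_mulVec]
  have hMherm : Mre.IsHermitian := by
    refine IsHermitian.sub ?_ ?_
    · exact Matrix.ext fun x y => by simp [conjTranspose_apply, hsymm x y]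
    · show ((lam • 1 : Matrix X X ℝ))ᴴ = (lam • 1 : Matrix X X ℝ)
      ext x y
      simp [conjTranspose_apply, Matrix.one_apply, eq_comm]
  -- positive semidefiniteness of Mre via minimality of lam
  have hMpsd : Mre.PosSemidef := by
    apply hMherm.posSemidef_iff_eigenvalues_nonneg.mpr
    intro i
    show 0 ≤ hMherm.eigenvalues i
    set wv : X → ℝ := ⇑(hMherm.eigenvectorBasis i) with hwv
    have hmv := hMherm.mulVec_eigenvectorBasis i
    have hwvne : wv ≠ 0 := by
      intro h
      apply hMherm.eigenvectorBasis.orthonormal.ne_zero i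
      ext x
      exact congrFun h x
    have hHwv : Hre *ᵥ wv = (hMherm.eigenvalues i + lam) • wv := by
      have := hMmv wv
      rw [hmv] at this
      funext x
      have := congrFun this x
      simp only [Pi.sub_apply, Pi.smul_apply, smul_eq_mul] at this ⊢
      linarith
    have hground : H *ᵥ c wv = ((hMherm.eigenvalues i + lam : ℝ) : ℂ) • c wv := by
      rw [hcmv, hHwv, hcsmul]
    have := hmin _ ⟨c wv, hcne wv hwvne, hground⟩
    linarith
  have hq0 : ∀ u : X → ℝ, 0 ≤ u ⬝ᵥ (Mre *ᵥ u) := by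
    intro u
    simpa using hMpsd.dotProduct_mulVec_nonneg u
  have hqz : ∀ u : X → ℝ, u ⬝ᵥ (Mre *ᵥ u) = 0 ↔ Mre *ᵥ u = 0 := by
    intro u
    simpa using hMpsd.dotProduct_mulVec_zero_iff u
  -- quadratic form splitting
  have hqsplit : ∀ u : X → ℝ,
      u ⬝ᵥ (Mre *ᵥ u) = u ⬝ᵥ (Hre *ᵥ u) - lam * (u ⬝ᵥ u) := by
    intro u
    rw [hMmv]
    simp [dotProduct_sub, dotProduct_smul, smul_eq_mul]
  -- the ground space is closed under absolute value
  have habs : ∀ u : X → ℝ, Mre *ᵥ u = 0 → Mre *ᵥ (fun x => |u x|) = 0 := by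
    intro u hu
    set a : X → ℝ := fun x => |u x| with ha
    have haa : a ⬝ᵥ a = u ⬝ᵥ u := by
      refine Finset.sum_congr rfl fun x _ => ?_
      simp [ha, abs_mul_abs_self]
    have hHa : a ⬝ᵥ (Hre *ᵥ a) ≤ u ⬝ᵥ (Hre *ᵥ u) := by
      simp only [dotProduct, mulVec, Finset.mul_sum]
      refine Finset.sum_le_sum fun x _ => Finset.sum_le_sum fun y _ => ?_
      rcases eq_or_ne x y with rfl | hxy
      · simp only [ha]
        have h4 : |u x| * (Hre x x * |u x|) = Hre x x * (|u x| * |u x|) := by ring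
        rw [h4, abs_mul_abs_self]
        exact le_of_eq (by ring)
      · have hH : Hre x y ≤ 0 := (hstoq x y hxy).2
        have h1 : u x * u y ≤ |u x * u y| := le_abs_self _
        have h2 : Hre x y * |u x * u y| ≤ Hre x y * (u x * u y) :=
          mul_le_mul_of_nonpos_left h1 hH
        simp only [ha]
        have h4 : |u x| * (Hre x y * |u y|) = Hre x y * |u x * u y| := by
          rw [abs_mul]; ring
        have h5 : u x * (Hre x y * u y) = Hre x y * (u x * u y) := by ring
        rw [h4, h5]
        exact h2
    have hqa : a ⬝ᵥ (Mre *ᵥ a) ≤ 0 := by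
      have h0 : u ⬝ᵥ (Mre *ᵥ u) = 0 := by rw [hu]; simp
      rw [hqsplit] at h0 ⊢
      rw [haa]
      linarith
    exact (hqz a).mp (le_antisymm hqa (hq0 a))
  -- decompose the real ground space
  set V : Submodule ℝ (X → ℝ) := LinearMap.ker Mre.mulVecLin with hV
  have hVmem : ∀ u : X → ℝ, u ∈ V ↔ Mre *ᵥ u = 0 := fun u => by
    simp [hV, LinearMap.mem_ker, mulVecLin_apply]
  obtain ⟨r, v, hvV, hv0, hvne, hvdisj, hvspan⟩ :=
    absClosed_decomp V (fun u hu => (hVmem _).mpr (habs u ((hVmem _).mp hu)))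
  -- normalization
  set nrm : Fin r → ℝ := fun j => Real.sqrt (v j ⬝ᵥ v j) with hnrm
  have hvv : ∀ j, 0 < v j ⬝ᵥ v j := by
    intro j
    have h0 : 0 ≤ v j ⬝ᵥ v j := Finset.sum_nonneg fun x _ => mul_self_nonneg _
    rcases h0.lt_or_eq with h | h
    · exact h
    · exact absurd (dotProduct_self_eq_zero.mp h.symm) (hvne j)
  have hnrmpos : ∀ j, 0 < nrm j := fun j => Real.sqrt_pos.mpr (hvv j)
  have hns : ∀ j, nrm j * nrm j = v j ⬝ᵥ v j := fun j => Real.mul_self_sqrt (hvv j).le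
  set uu : Fin r → X → ℝ := fun j => (nrm j)⁻¹ • v j with huu
  set φ : Fin r → X → ℂ := fun j => c (uu j) with hφ
  have huV : ∀ j, uu j ∈ V := fun j => V.smul_mem _ (hvV j)
  have hφground : ∀ j, H *ᵥ φ j = (lam : ℂ) • φ j := by
    intro j
    have h1 : Mre *ᵥ uu j = 0 := (hVmem _).mp (huV j)
    rw [hMmv, sub_eq_zero] at h1
    rw [hφ]
    show H *ᵥ c (uu j) = (lam : ℂ) • c (uu j)
    rw [hcmv, h1, hcsmul]
  have hφfix : ∀ j, P *ᵥ φ j = φ j := fun j => hPfix _ (hφground j)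
  have hstarφ : ∀ j, star (φ j) = φ j := by
    intro j; funext x
    simp [hφ, hc, Pi.star_apply, Complex.star_def, Complex.conj_ofReal]
  have hφdot : ∀ j j', star (φ j) ⬝ᵥ φ j' = ((uu j ⬝ᵥ uu j' : ℝ) : ℂ) := by
    intro j j'
    rw [hstarφ]
    show ∑ x, ((uu j x : ℝ) : ℂ) * ((uu j' x : ℝ) : ℂ) = ((∑ x, uu j x * uu j' x : ℝ) : ℂ)
    push_cast
    rfl
  have hφnorm1 : ∀ j, star (φ j) ⬝ᵥ φ j = 1 := by
    intro j
    rw [hφdot]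
    have huuj : uu j ⬝ᵥ uu j = 1 := by
      have h1 : uu j ⬝ᵥ uu j = (nrm j)⁻¹ * ((nrm j)⁻¹ * (v j ⬝ᵥ v j)) := by
        simp [huu, smul_dotProduct, dotProduct_smul, smul_eq_mul]
      rw [h1, ← hns j]
      field_simp
      exact div_self (hnrmpos j).ne'
    rw [huuj]
    norm_num
  have hφorth : ∀ j j', j ≠ j' → star (φ j) ⬝ᵥ φ j' = 0 := by
    intro j j' hne
    rw [hφdot]
    have : uu j ⬝ᵥ uu j' = 0 := by
      refine Finset.sum_eq_zero fun x _ => ?_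
      simp only [huu, Pi.smul_apply, smul_eq_mul]
      rw [show (nrm j)⁻¹ * v j x * ((nrm j')⁻¹ * v j' x)
          = (nrm j)⁻¹ * (nrm j')⁻¹ * (v j x * v j' x) by ring, hvdisj j j' hne x, mul_zero]
    rw [this]
    norm_num
  have hφprop : ∀ j x, (φ j x).im = 0 ∧ 0 ≤ (φ j x).re := by
    intro j x
    refine ⟨by simp [hφ, hc], ?_⟩
    have : 0 ≤ uu j x := by
      simp only [huu, Pi.smul_apply, smul_eq_mul]
      exact mul_nonneg (inv_nonneg.mpr (hnrmpos j).le) (hv0 j x)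
    simpa [hφ, hc] using this
  -- the candidate projection
  set Q : Matrix X X ℂ := ∑ j, vecMulVec (φ j) (star (φ j)) with hQ
  have hQentry : ∀ i k, Q i k = ∑ j, φ j i * star (φ j) k := by
    intro i k
    simp [hQ, Matrix.sum_apply, vecMulVec_apply]
  have hQmv : ∀ x : X → ℂ, Q *ᵥ x = ∑ j, (star (φ j) ⬝ᵥ x) • φ j := by
    intro x
    funext i
    show ∑ k, Q i k * x k = (∑ j, (star (φ j) ⬝ᵥ x) • φ j) i
    simp only [Finset.sum_apply, Pi.smul_apply, smul_eq_mul, hQentry, dotProduct,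
      Finset.sum_mul]
    rw [Finset.sum_comm]
    exact Finset.sum_congr rfl fun j _ => Finset.sum_congr rfl fun k _ => by ring
  have hQφ : ∀ j, Q *ᵥ φ j = φ j := by
    intro j
    rw [hQmv]
    rw [Finset.sum_eq_single j]
    · rw [hφnorm1 j, one_smul]
    · intro i _ hij
      rw [hφorth i j hij, zero_smul]
    · intro h
      exact absurd (Finset.mem_univ j) h
  -- Q fixes all ground states
  have hQfix : ∀ w : X → ℂ, H *ᵥ w = (lam : ℂ) • w → Q *ᵥ w = w := by
    intro w hw
    set a : X → ℝ := fun x => (w x).re with ha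
    set b : X → ℝ := fun x => (w x).im with hb
    have hsum : ∀ x, (∑ y, ((Hre x y : ℝ) : ℂ) * w y) = (lam : ℂ) * w x := by
      intro x
      have hx := congrFun hw x
      have hx2 : (∑ y, H x y * w y) = (lam : ℂ) * w x := hx
      rw [← hx2]
      exact Finset.sum_congr rfl fun y _ => by rw [hHr x y]
    have haV : a ∈ V := by
      rw [hVmem, hMmv, sub_eq_zero]
      funext x
      have := congrArg Complex.re (hsum x)
      rw [Complex.re_sum] at this
      simp only [Complex.mul_re, Complex.ofReal_re, Complex.ofReal_im, zero_mul,
        sub_zero] at this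
      simpa [mulVec, dotProduct, ha, Pi.smul_apply, smul_eq_mul] using this
    have hbV : b ∈ V := by
      rw [hVmem, hMmv, sub_eq_zero]
      funext x
      have := congrArg Complex.im (hsum x)
      rw [Complex.im_sum] at this
      simp only [Complex.mul_im, Complex.ofReal_re, Complex.ofReal_im, zero_mul,
        add_zero] at this
      simpa [mulVec, dotProduct, hb, Pi.smul_apply, smul_eq_mul] using this
    obtain ⟨ca, hca⟩ := (Submodule.mem_span_range_iff_exists_fun ℝ).mp (hvspan haV)
    obtain ⟨cb, hcb⟩ := (Submodule.mem_span_range_iff_exists_fun ℝ).mp (hvspan hbV)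
    set d : Fin r → ℂ := fun j => ((ca j * nrm j : ℝ) : ℂ) + ((cb j * nrm j : ℝ) : ℂ) * Complex.I
      with hd
    have hwsum : w = ∑ j, d j • φ j := by
      funext x
      have h1 : a x = ∑ j, ca j * v j x := by
        rw [← hca]; simp [Finset.sum_apply, Pi.smul_apply, smul_eq_mul]
      have h2 : b x = ∑ j, cb j * v j x := by
        rw [← hcb]; simp [Finset.sum_apply, Pi.smul_apply, smul_eq_mul]
      have hterm : ∀ j, d j • φ j x
          = ((ca j * v j x : ℝ) : ℂ) + ((cb j * v j x : ℝ) : ℂ) * Complex.I := by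
        intro j
        have hφx : φ j x = (((nrm j)⁻¹ * v j x : ℝ) : ℂ) := by
          simp [hφ, hc, huu, Pi.smul_apply, smul_eq_mul]
        have hnj : (nrm j : ℝ) ≠ 0 := (hnrmpos j).ne'
        have hnj' : ((nrm j : ℝ) : ℂ) ≠ 0 := Complex.ofReal_ne_zero.mpr hnj
        rw [smul_eq_mul, hφx, hd]
        push_cast
        field_simp [hnj']
      calc w x = ((a x : ℝ) : ℂ) + ((b x : ℝ) : ℂ) * Complex.I := (Complex.re_add_im (w x)).symm
        _ = ∑ j, (((ca j * v j x : ℝ) : ℂ) + ((cb j * v j x : ℝ) : ℂ) * Complex.I) := by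
            rw [h1, h2]
            push_cast
            rw [Finset.sum_add_distrib, Finset.sum_mul]
        _ = ∑ j, d j • φ j x := by
            exact Finset.sum_congr rfl fun j _ => (hterm j).symm
        _ = (∑ j, d j • φ j) x := by simp [Finset.sum_apply]
    rw [hwsum, ← mulVecLin_apply, map_sum]
    exact Finset.sum_congr rfl fun j _ => by
      rw [_root_.map_smul, mulVecLin_apply, hQφ j]
  -- matrix identities
  have hPvmv : ∀ (a b : X → ℂ), P * vecMulVec a b = vecMulVec (P *ᵥ a) b := by
    intro a b
    ext i k
    simp only [mul_apply, vecMulVec_apply, mulVec, dotProduct, Finset.sum_mul]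
    exact Finset.sum_congr rfl fun l _ => by ring
  have hPQ : P * Q = Q := by
    rw [hQ, Finset.mul_sum]
    exact Finset.sum_congr rfl fun j _ => by rw [hPvmv, hφfix j]
  have hQP : Q * P = P := by
    have hmv : ∀ y : X → ℂ, (Q * P) *ᵥ y = P *ᵥ y := by
      intro y
      rw [← mulVec_mulVec]
      exact hQfix _ (hPrange y)
    ext i k
    have := congrFun (hmv (Pi.single k 1)) i
    simpa [mulVec_single] using this
  have hQherm : Qᴴ = Q := by
    rw [hQ, conjTranspose_sum]
    refine Finset.sum_congr rfl fun j _ => ?_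
    ext i k
    simp only [conjTranspose_apply, vecMulVec_apply, Pi.star_apply, star_mul', star_star]
    ring
  have hPQ' : P * Q = P := by
    have := congrArg conjTranspose hQP
    rwa [conjTranspose_mul, hP1.eq, hQherm] at this
  exact ⟨r, φ, hφprop, hφnorm1, hφorth, by rw [← hQ, ← hPQ, hPQ']⟩
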